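/- arXiv:1008.1201 — 5 statements merged into one kernel-verified Lean document; each statement's English description precedes it below -/
import Mathlib

section
/- Let σ₁ ≥ σ₂ ≥ … ≥ σ_r > 0 and let D = diag(√σ₁, …, √σ_r). For every r×r Hermitian matrix H with ‖H‖₂ ≤ 1 and every i with 1 ≤ i ≤ r, the i-th largest singular value of DHD satisfies σ_i(DHD) ≤ min_{1 ≤ j ≤ i} √(σ_j σ_{i−j+1}). -/
open Matrix Finset

/-- Spectral norm (largest singular value / L2 operator norm) of a complex matrix. -/
noncomputable def specNorm {m n : ℕ} (M : Matrix (Fin m) (Fin n) ℂ) : ℝ :=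
  ‖LinearMap.toContinuousLinearMap (Matrix.toEuclideanLin M)‖

/-- The `i`-th largest singular value of a square complex matrix (`i = 0` is the largest). -/
noncomputable def sval {n : ℕ} (M : Matrix (Fin n) (Fin n) ℂ) (i : Fin n) : ℝ :=
  Real.sqrt ((Matrix.isHermitian_conjTranspose_mul_self M).eigenvalues
    (Tuple.sort (Matrix.isHermitian_conjTranspose_mul_self M).eigenvalues i.rev))

/-- `i - j` in `Fin r` (0-based counterpart of the index `i - j + 1`). -/
def isub {r : ℕ} (i j : Fin r) : Fin r :=
  ⟨i.val - j.val, lt_of_le_of_lt (Nat.sub_le _ _) i.isLt⟩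

/-- `min_{1 ≤ j ≤ i} √(σ_j σ_{i-j+1})`, written 0-based. -/
noncomputable def pairMin {r : ℕ} (σ : Fin r → ℝ) (i : Fin r) : ℝ :=
  (Finset.Iic i).inf' ⟨i, Finset.mem_Iic.mpr le_rfl⟩
    (fun j => Real.sqrt (σ j * σ (isub i j)))


section Aux

lemma sorted_le_of_count_le {r : ℕ} (μ : Fin r → ℝ) (c : ℝ) (i : Fin r)
    (h : (Finset.univ.filter (fun k => c < μ k)).card ≤ i.val) :
    μ (Tuple.sort μ i.rev) ≤ c := by
  by_contra hlt
  push_neg at hlt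
  have hmono := Tuple.monotone_sort μ
  have hsub : Finset.Ici i.rev ⊆ Finset.univ.filter (fun k => c < μ (Tuple.sort μ k)) := by
    intro k hk
    simp only [Finset.mem_filter, Finset.mem_univ, true_and]
    exact lt_of_lt_of_le hlt (hmono (Finset.mem_Ici.mp hk))
  have hcard1 : (Finset.Ici i.rev).card = i.val + 1 := by
    rw [Fin.card_Ici, Fin.val_rev]
    omega
  have hcard2 : (Finset.univ.filter (fun k => c < μ (Tuple.sort μ k))).card
      = (Finset.univ.filter (fun k => c < μ k)).card := by
    apply Finset.card_bij (fun k _ => Tuple.sort μ k)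
    · intro a ha
      simp only [Finset.mem_filter, Finset.mem_univ, true_and] at ha ⊢
      exact ha
    · intro a _ b _ hab
      exact (Tuple.sort μ).injective hab
    · intro b hb
      refine ⟨(Tuple.sort μ).symm b, ?_, by simp⟩
      simp only [Finset.mem_filter, Finset.mem_univ, true_and, Equiv.apply_symm_apply] at hb ⊢
      exact hb
  have := Finset.card_le_card hsub
  omega

/-- Entrywise bound for a diagonal matrix acting on a vector. -/
lemma norm_toEuclideanLin_diagonal_le {r : ℕ} (d : Fin r → ℂ) (t : ℝ) (ht : 0 ≤ t)
    (x : EuclideanSpace ℂ (Fin r)) (hx : ∀ l, x l ≠ 0 → ‖d l‖ ≤ t) :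
    ‖Matrix.toEuclideanLin (Matrix.diagonal d) x‖ ≤ t * ‖x‖ := by
  rw [EuclideanSpace.norm_eq, EuclideanSpace.norm_eq]
  have hentry : ∀ l, (Matrix.toEuclideanLin (Matrix.diagonal d) x) l = d l * x l := by
    intro l
    rw [Matrix.toEuclideanLin_apply]
    simp [Matrix.mulVec_diagonal]
  calc Real.sqrt (∑ l, ‖(Matrix.toEuclideanLin (Matrix.diagonal d) x) l‖ ^ 2)
      ≤ Real.sqrt (∑ l, t ^ 2 * ‖x l‖ ^ 2) := by
        apply Real.sqrt_le_sqrt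
        apply Finset.sum_le_sum
        intro l _
        rw [hentry l]
        by_cases h0 : x l = 0
        · simp [h0]
        · rw [norm_mul, mul_pow]
          apply mul_le_mul_of_nonneg_right _ (sq_nonneg _)
          exact pow_le_pow_left₀ (norm_nonneg _) (hx l h0) 2
    _ = t * Real.sqrt (∑ l, ‖x l‖ ^ 2) := by
        rw [← Finset.mul_sum, Real.sqrt_mul (sq_nonneg t), Real.sqrt_sq ht]

/-- Projection onto the first `m` coordinates. -/
def projLE {r m : ℕ} (h : m ≤ r) :
    EuclideanSpace ℂ (Fin r) →ₗ[ℂ] EuclideanSpace ℂ (Fin m) where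
  toFun x := WithLp.toLp 2 (fun l => x (Fin.castLE h l))
  map_add' x y := rfl
  map_smul' a x := rfl

lemma norm_toEuclideanLin_le_of_specNorm {r : ℕ} (H : Matrix (Fin r) (Fin r) ℂ)
    (hH : specNorm H ≤ 1) (z : EuclideanSpace ℂ (Fin r)) :
    ‖Matrix.toEuclideanLin H z‖ ≤ ‖z‖ := by
  have h1 := (LinearMap.toContinuousLinearMap (Matrix.toEuclideanLin H)).le_opNorm z
  rw [show (LinearMap.toContinuousLinearMap (Matrix.toEuclideanLin H)) z
      = Matrix.toEuclideanLin H z from rfl] at h1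
  calc ‖Matrix.toEuclideanLin H z‖ ≤ specNorm H * ‖z‖ := h1
    _ ≤ 1 * ‖z‖ := mul_le_mul_of_nonneg_right hH (norm_nonneg _)
    _ = ‖z‖ := one_mul _

lemma sval_le_of_subspace {r : ℕ} (M : Matrix (Fin r) (Fin r) ℂ) (c : ℝ) (hc : 0 ≤ c)
    (i : Fin r) (V : Submodule ℂ (EuclideanSpace ℂ (Fin r)))
    (hdim : r ≤ Module.finrank ℂ V + i.val)
    (hV : ∀ x ∈ V, ‖Matrix.toEuclideanLin M x‖ ≤ c * ‖x‖) :
    sval M i ≤ c := by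
  classical
  set hA := Matrix.isHermitian_conjTranspose_mul_self M with hAdef
  set b := hA.eigenvectorBasis with hbdef
  set μ := hA.eigenvalues with hμdef
  set A' := Matrix.toEuclideanLin (Mᴴ * M) with hA'def
  set T := Matrix.toEuclideanLin M with hTdef
  -- eigenvector equation
  have hbk : ∀ k, A' (b k) = (μ k : ℂ) • b k := by
    intro k
    have h := hA.mulVec_eigenvectorBasis k
    rw [hA'def, Matrix.toEuclideanLin_apply]
    ext l
    rw [h]
    simp [Complex.real_smul]
    rfl
  have hsym : LinearMap.IsSymmetric A' := (Matrix.isHermitian_iff_isSymmetric.1 hA)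
  have hrepr : ∀ x k, b.repr (A' x) k = (μ k : ℂ) * b.repr x k := by
    intro x k
    rw [OrthonormalBasis.repr_apply_apply, OrthonormalBasis.repr_apply_apply, ← hsym (b k) x,
      hbk k, inner_smul_left, Complex.conj_ofReal]
  -- A' = Mᴴ ∘ M in linear map form
  have hcomp : ∀ x, A' x = Matrix.toEuclideanLin Mᴴ (T x) := by
    intro x
    simp only [hA'def, hTdef, Matrix.toEuclideanLin_apply]
    ext l
    simp [← Matrix.mulVec_mulVec]
  -- inner via repr
  have hinner : ∀ x y : EuclideanSpace ℂ (Fin r),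
      (inner ℂ x y : ℂ) = ∑ k, (starRingEnd ℂ) (b.repr x k) * (b.repr y k) := by
    intro x y
    rw [← b.repr.inner_map_map x y]
    simp only [PiLp.inner_apply, RCLike.inner_apply]
    exact Finset.sum_congr rfl (fun _ _ => mul_comm _ _)
  -- norm of T x via eigenvalues
  have hTnorm : ∀ x : EuclideanSpace ℂ (Fin r),
      ‖T x‖ ^ 2 = ∑ k, μ k * Complex.normSq (b.repr x k) := by
    intro x
    have h1 : (inner ℂ (T x) (T x) : ℂ) = inner ℂ x (A' x) := by
      rw [hcomp x, Matrix.toEuclideanLin_conjTranspose_eq_adjoint, LinearMap.adjoint_inner_right]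
    have h2 : (inner ℂ x (A' x) : ℂ) = ∑ k, ((μ k * Complex.normSq (b.repr x k) : ℝ) : ℂ) := by
      rw [hinner]
      congr 1
      ext k
      rw [hrepr]
      push_cast
      rw [Complex.normSq_eq_conj_mul_self]
      ring
    have h3 : ‖T x‖ ^ 2 = Complex.re (inner ℂ (T x) (T x) : ℂ) := by
      rw [← inner_self_eq_norm_sq (𝕜 := ℂ)]
      rfl
    rw [h3, h1, h2]
    rw [Complex.re_sum]
    simp
  have hxnorm : ∀ x : EuclideanSpace ℂ (Fin r),
      ‖x‖ ^ 2 = ∑ k, Complex.normSq (b.repr x k) := by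
    intro x
    have h3 : ‖x‖ ^ 2 = Complex.re (inner ℂ x x : ℂ) := by
      rw [← inner_self_eq_norm_sq (𝕜 := ℂ)]; rfl
    rw [h3, hinner, Complex.re_sum]
    congr 1; ext k
    rw [← Complex.normSq_eq_conj_mul_self, Complex.ofReal_re]
  -- the set of large eigenvalues
  set S : Finset (Fin r) := Finset.univ.filter (fun k => c ^ 2 < μ k) with hSdef
  set W : Submodule ℂ (EuclideanSpace ℂ (Fin r)) :=
    Submodule.span ℂ (Set.range (⇑b ∘ (Subtype.val : {k // k ∈ S} → Fin r))) with hWdef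
  have hWrank : Module.finrank ℂ W = S.card := by
    rw [hWdef, finrank_span_eq_card
      (b.orthonormal.linearIndependent.comp Subtype.val Subtype.val_injective)]
    exact Fintype.card_coe S
  -- coordinates of elements of W vanish off S
  have hWcoord : ∀ x ∈ W, ∀ k, k ∉ S → b.repr x k = 0 := by
    intro x hx k hk
    induction hx using Submodule.span_induction with
    | mem y hy =>
      obtain ⟨m, rfl⟩ := hy
      rw [Function.comp_apply, OrthonormalBasis.repr_self]
      rw [EuclideanSpace.single_apply]
      simp only [ite_eq_right_iff]
      intro hkm
      exact absurd (hkm ▸ m.2) hk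
    | zero => simp
    | add y z _ _ hy hz => rw [map_add]; simp [hy, hz]
    | smul a y _ hy => simp [hy]
  -- strict quadratic form bound on W
  have hWlow : ∀ x ∈ W, x ≠ 0 → c ^ 2 * ‖x‖ ^ 2 < ‖T x‖ ^ 2 := by
    intro x hx hx0
    rw [hTnorm, hxnorm, Finset.mul_sum]
    apply Finset.sum_lt_sum
    · intro k _
      by_cases hk : k ∈ S
      · have : c ^ 2 ≤ μ k := le_of_lt (by simpa [hSdef] using hk)
        exact mul_le_mul_of_nonneg_right this (Complex.normSq_nonneg _)
      · rw [hWcoord x hx k hk]; simp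
    · have : b.repr x ≠ 0 := by simpa using hx0
      obtain ⟨k, hk⟩ : ∃ k, b.repr x k ≠ 0 := by
        by_contra hcon
        push_neg at hcon
        exact this (by ext k; exact hcon k)
      have hkS : k ∈ S := by
        by_contra hkn
        exact hk (hWcoord x hx k hkn)
      refine ⟨k, Finset.mem_univ k, ?_⟩
      have h1 : c ^ 2 < μ k := by simpa [hSdef] using hkS
      have h2 : 0 < Complex.normSq (b.repr x k) := by
        simpa [Complex.normSq_pos] using hk
      exact mul_lt_mul_of_pos_right h1 h2
  -- V and W are disjoint
  have hdisj : V ⊓ W = ⊥ := by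
    rw [Submodule.eq_bot_iff]
    rintro x ⟨hxV, hxW⟩
    by_contra hx0
    have h1 := hWlow x hxW hx0
    have h2 : ‖T x‖ ^ 2 ≤ c ^ 2 * ‖x‖ ^ 2 := by
      have := hV x hxV
      calc ‖T x‖ ^ 2 ≤ (c * ‖x‖) ^ 2 := by
            apply pow_le_pow_left₀ (norm_nonneg _) this
        _ = c ^ 2 * ‖x‖ ^ 2 := by ring
    linarith
  -- dimension count
  have hcount : S.card ≤ i.val := by
    have h1 : Module.finrank ℂ V + Module.finrank ℂ W ≤ r := by
      have h2 := Submodule.finrank_sup_add_finrank_inf_eq V W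
      have h3 : Module.finrank ℂ ↥(V ⊔ W) ≤ r := by
        have := Submodule.finrank_le (V ⊔ W)
        simpa [finrank_euclideanSpace] using this
      rw [hdisj] at h2
      simp only [finrank_bot, add_zero] at h2
      omega
    omega
  -- conclude
  have hfin := sorted_le_of_count_le μ (c ^ 2) i hcount
  unfold sval
  calc Real.sqrt _ ≤ Real.sqrt (c ^ 2) := Real.sqrt_le_sqrt hfin
    _ = c := Real.sqrt_sq hc

end Aux

/-- For Hermitian `H` with spectral norm at most `1`,
`σ_i(DHD) ≤ min_{1 ≤ j ≤ i} √(σ_j σ_{i-j+1})`. -/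
theorem sval_DHD_le_pairMin {r : ℕ} (σ : Fin r → ℝ) (hσ : Antitone σ)
    (hpos : ∀ j, 0 < σ j) (H : Matrix (Fin r) (Fin r) ℂ) (hH : H.IsHermitian)
    (hnorm : specNorm H ≤ 1) (i : Fin r) :
    sval (Matrix.diagonal (fun j => (Real.sqrt (σ j) : ℂ)) * H *
        Matrix.diagonal (fun j => (Real.sqrt (σ j) : ℂ))) i ≤ pairMin σ i := by
  classical
  set d : Fin r → ℂ := fun j => (Real.sqrt (σ j) : ℂ) with hd
  set D := Matrix.diagonal d with hD
  apply Finset.le_inf'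
  intro j hj
  have hji : j ≤ i := Finset.mem_Iic.mp hj
  set K := isub i j with hK
  have hKval : K.val = i.val - j.val := rfl
  have hkr : K.val ≤ r := le_of_lt K.isLt
  have hjr : j.val ≤ r := le_of_lt j.isLt
  -- the two projection maps
  set Ψ₁ := projLE (r := r) hkr with hΨ₁
  set Ψ₂ := (projLE (r := r) hjr).comp (Matrix.toEuclideanLin (H * D)) with hΨ₂
  set V := LinearMap.ker Ψ₁ ⊓ LinearMap.ker Ψ₂ with hV
  -- dimension bound
  have hdim : r ≤ Module.finrank ℂ V + i.val := by
    have e1 := LinearMap.finrank_range_add_finrank_ker Ψ₁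
    have e2 := LinearMap.finrank_range_add_finrank_ker Ψ₂
    have hr1 : Module.finrank ℂ (LinearMap.range Ψ₁) ≤ K.val := by
      have := Submodule.finrank_le (LinearMap.range Ψ₁)
      simpa [finrank_euclideanSpace] using this
    have hr2 : Module.finrank ℂ (LinearMap.range Ψ₂) ≤ j.val := by
      have := Submodule.finrank_le (LinearMap.range Ψ₂)
      simpa [finrank_euclideanSpace] using this
    have hE : Module.finrank ℂ (EuclideanSpace ℂ (Fin r)) = r := by
      simp [finrank_euclideanSpace]
    rw [hE] at e1 e2
    have e3 := Submodule.finrank_sup_add_finrank_inf_eq (LinearMap.ker Ψ₁) (LinearMap.ker Ψ₂)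
    have e4 : Module.finrank ℂ ↥(LinearMap.ker Ψ₁ ⊔ LinearMap.ker Ψ₂) ≤ r := by
      have := Submodule.finrank_le (LinearMap.ker Ψ₁ ⊔ LinearMap.ker Ψ₂)
      simpa [finrank_euclideanSpace] using this
    have hij : K.val + j.val = i.val := by
      rw [hKval]; omega
    rw [hV]
    omega
  -- norm bound on V
  apply sval_le_of_subspace _ _ (Real.sqrt_nonneg _) i V hdim
  intro x hx
  obtain ⟨hx1, hx2⟩ := Submodule.mem_inf.mp hx
  rw [LinearMap.mem_ker] at hx1 hx2
  -- decompose M x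
  set y := Matrix.toEuclideanLin (H * D) x with hy
  have hMx : Matrix.toEuclideanLin (D * H * D) x = Matrix.toEuclideanLin D y := by
    rw [hy]
    simp only [Matrix.toEuclideanLin_apply, Equiv.apply_symm_apply]
    rw [Matrix.mulVec_mulVec, ← Matrix.mul_assoc]
  have hsplit : y = Matrix.toEuclideanLin H (Matrix.toEuclideanLin D x) := by
    rw [hy]
    simp only [Matrix.toEuclideanLin_apply, Equiv.apply_symm_apply]
    rw [Matrix.mulVec_mulVec]
  -- x coordinates vanish below K
  have hxc : ∀ l : Fin r, l.val < K.val → x l = 0 := by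
    intro l hl
    have h0 : Ψ₁ x = 0 := hx1
    have h1 : (Ψ₁ x) ⟨l.val, hl⟩ = 0 := by rw [h0]; rfl
    have h2 : Fin.castLE hkr (⟨l.val, hl⟩ : Fin K.val) = l := by
      apply Fin.ext; rfl
    rw [show (Ψ₁ x) ⟨l.val, hl⟩ = x (Fin.castLE hkr ⟨l.val, hl⟩) from rfl, h2] at h1
    exact h1
  -- y coordinates vanish below j
  have hyc : ∀ l : Fin r, l.val < j.val → y l = 0 := by
    intro l hl
    have h0 : Ψ₂ x = 0 := hx2
    have h1 : (Ψ₂ x) ⟨l.val, hl⟩ = 0 := by rw [h0]; rfl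
    have h2 : Fin.castLE hjr (⟨l.val, hl⟩ : Fin j.val) = l := by
      apply Fin.ext; rfl
    rw [show (Ψ₂ x) ⟨l.val, hl⟩ = y (Fin.castLE hjr ⟨l.val, hl⟩) from rfl, h2] at h1
    exact h1
  -- norm of d entries
  have hdnorm : ∀ l, ‖d l‖ = Real.sqrt (σ l) := by
    intro l
    rw [hd]
    simp [Complex.norm_real, abs_of_nonneg (Real.sqrt_nonneg _)]
  -- step 1 : ‖D y‖ ≤ √σⱼ ‖y‖
  have step1 : ‖Matrix.toEuclideanLin D y‖ ≤ Real.sqrt (σ j) * ‖y‖ := by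
    apply norm_toEuclideanLin_diagonal_le d _ (Real.sqrt_nonneg _)
    intro l hl
    have hlj : j ≤ l := by
      by_contra hc
      push_neg at hc
      exact hl (hyc l hc)
    rw [hdnorm]
    exact Real.sqrt_le_sqrt (hσ hlj)
  -- step 3 : ‖D x‖ ≤ √σ_K ‖x‖
  have step3 : ‖Matrix.toEuclideanLin D x‖ ≤ Real.sqrt (σ K) * ‖x‖ := by
    apply norm_toEuclideanLin_diagonal_le d _ (Real.sqrt_nonneg _)
    intro l hl
    have hlK : K ≤ l := by
      by_contra hc
      push_neg at hc
      exact hl (hxc l hc)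
    rw [hdnorm]
    exact Real.sqrt_le_sqrt (hσ hlK)
  -- step 2 : ‖y‖ ≤ ‖D x‖
  have step2 : ‖y‖ ≤ ‖Matrix.toEuclideanLin D x‖ := by
    rw [hsplit]
    exact norm_toEuclideanLin_le_of_specNorm H hnorm _
  calc ‖Matrix.toEuclideanLin (D * H * D) x‖
      = ‖Matrix.toEuclideanLin D y‖ := by rw [hMx]
    _ ≤ Real.sqrt (σ j) * ‖y‖ := step1
    _ ≤ Real.sqrt (σ j) * (Real.sqrt (σ K) * ‖x‖) := by
        apply mul_le_mul_of_nonneg_left _ (Real.sqrt_nonneg _)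
        exact le_trans step2 step3
    _ = Real.sqrt (σ j * σ K) * ‖x‖ := by
        rw [Real.sqrt_mul (le_of_lt (hpos j))]
        ring
end

section
/- Let σ₁ ≥ σ₂ ≥ … ≥ σ_r > 0 and let D = diag(√σ₁, …, √σ_r). For every i with 1 ≤ i ≤ r there exists an r×r Hermitian matrix H with ‖H‖₂ ≤ 1 such that σ_i(DHD) = min_{1 ≤ j ≤ i} √(σ_j σ_{i−j+1}). In fact, one may take H to be zero except that its leading i×i principal submatrix is the anti-diagonal matrix (ones on the antidiagonal, zeros elsewhere). -/
open Matrix Finset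

section Aux

open Polynomial

theorem eigs_congr' {n : Type*} [Fintype n] [DecidableEq n] {A B : Matrix n n ℂ}
    (h : A = B) (hA : A.IsHermitian) (hB : B.IsHermitian) :
    hA.eigenvalues = hB.eigenvalues := by subst h; rfl

theorem charpoly_unitary_conj' {n : Type*} [Fintype n] [DecidableEq n]
    (U : Matrix.unitaryGroup n ℂ) (A : Matrix n n ℂ) :
    ((U : Matrix n n ℂ) * A * star (U : Matrix n n ℂ)).charpoly = A.charpoly := by
  set u : Matrix n n ℂ := (U : Matrix n n ℂ)
  have h1 : u * star u = 1 := Matrix.mem_unitaryGroup_iff.mp U.2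
  have hmap1 : (C : ℂ →+* ℂ[X]).mapMatrix u * (C : ℂ →+* ℂ[X]).mapMatrix (star u) = 1 := by
    rw [← _root_.map_mul ((C : ℂ →+* ℂ[X]).mapMatrix) u (star u), h1, _root_.map_one]
  have key : charmatrix (u * A * star u) =
      (C : ℂ →+* ℂ[X]).mapMatrix u * charmatrix A * (C : ℂ →+* ℂ[X]).mapMatrix (star u) := by
    simp only [charmatrix, Matrix.mul_sub, Matrix.sub_mul]
    congr 1
    · have hc := (Matrix.scalar_commute (X : ℂ[X]) (fun r => Commute.all X r)
        ((C : ℂ →+* ℂ[X]).mapMatrix u)).eq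
      rw [← hc, Matrix.mul_assoc, hmap1, Matrix.mul_one]
    · rw [_root_.map_mul ((C : ℂ →+* ℂ[X]).mapMatrix) (u * A) (star u),
        _root_.map_mul ((C : ℂ →+* ℂ[X]).mapMatrix) u A]
  have hdet : ((C : ℂ →+* ℂ[X]).mapMatrix u).det * ((C : ℂ →+* ℂ[X]).mapMatrix (star u)).det
      = 1 := by rw [← Matrix.det_mul, hmap1, Matrix.det_one]
  rw [Matrix.charpoly, Matrix.charpoly, key, Matrix.det_mul, Matrix.det_mul]
  calc ((C : ℂ →+* ℂ[X]).mapMatrix u).det * (charmatrix A).det *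
        ((C : ℂ →+* ℂ[X]).mapMatrix (star u)).det
      = (charmatrix A).det * (((C : ℂ →+* ℂ[X]).mapMatrix u).det *
        ((C : ℂ →+* ℂ[X]).mapMatrix (star u)).det) := by ring
    _ = (charmatrix A).det := by rw [hdet, mul_one]

theorem eig_diagonal_multiset' {n : ℕ} (dv : Fin n → ℝ)
    (hA : (Matrix.diagonal (fun j => (dv j : ℂ))).IsHermitian) :
    Multiset.map hA.eigenvalues Finset.univ.val = Multiset.map dv Finset.univ.val := by
  have hdiag : ∀ (v : Fin n → ℝ), (Matrix.diagonal (fun j => (v j : ℂ))).charpoly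
      = ∏ j : Fin n, (X - C ((v j : ℂ))) := by
    intro v
    rw [Matrix.charpoly_of_upperTriangular _ (Matrix.blockTriangular_diagonal _)]
    simp [Matrix.diagonal_apply_eq]
  have h2 : (Matrix.diagonal (fun j => (dv j : ℂ))).charpoly
      = ∏ j : Fin n, (X - C ((hA.eigenvalues j : ℂ))) := by
    conv_lhs => rw [hA.spectral_theorem]
    rw [Unitary.conjStarAlgAut_apply, charpoly_unitary_conj']
    exact hdiag hA.eigenvalues
  have h3 := (hdiag dv).symm.trans h2
  have hr : ∀ (v : Fin n → ℝ), (∏ j : Fin n, (X - C ((v j : ℂ)))).roots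
      = Multiset.map (fun j => ((v j : ℝ) : ℂ)) Finset.univ.val := by
    intro v
    rw [Finset.prod_eq_multiset_prod]
    have : Multiset.map (fun j => X - C ((v j : ℂ))) Finset.univ.val
        = Multiset.map (fun a => X - C a)
          (Multiset.map (fun j => ((v j : ℝ) : ℂ)) Finset.univ.val) := by
      rw [Multiset.map_map]; rfl
    rw [this, roots_multiset_prod_X_sub_C]
  have h4 : Multiset.map (fun j => ((dv j : ℝ) : ℂ)) Finset.univ.val
      = Multiset.map (fun j => ((hA.eigenvalues j : ℝ) : ℂ)) Finset.univ.val := by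
    rw [← hr, ← hr, h3]
  have h5 : Multiset.map (fun x : ℝ => (x : ℂ)) (Multiset.map dv Finset.univ.val)
      = Multiset.map (fun x : ℝ => (x : ℂ)) (Multiset.map hA.eigenvalues Finset.univ.val) := by
    rw [Multiset.map_map, Multiset.map_map]; exact h4
  exact (Multiset.map_injective Complex.ofReal_injective h5).symm

theorem monotone_multiset_rev_min' {n : ℕ} (g dv : Fin n → ℝ) (hg : Monotone g)
    (hm : Multiset.map g Finset.univ.val = Multiset.map dv Finset.univ.val)
    (i : Fin n) (hd0 : ∀ k, 0 ≤ dv k) (hdpos : ∀ k, 0 < dv k ↔ k ≤ i) :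
    g i.rev = (Finset.Iic i).inf' ⟨i, Finset.mem_Iic.mpr le_rfl⟩ dv := by
  classical
  have hcount : ∀ (p : ℝ → Prop) [DecidablePred p],
      (Finset.univ.filter (fun k => p (g k))).card
        = (Finset.univ.filter (fun k => p (dv k))).card := by
    intro p _
    have h := congrArg (Multiset.countP p) hm
    rw [Multiset.countP_map, Multiset.countP_map] at h
    simpa [Multiset.countP_eq_card_filter, Finset.card, Finset.filter] using h
  have hg0 : ∀ k, 0 ≤ g k := by
    intro k
    have : g k ∈ Multiset.map dv Finset.univ.val := by
      rw [← hm]; exact Multiset.mem_map_of_mem _ (Finset.mem_univ k)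
    obtain ⟨j, -, hj⟩ := Multiset.mem_map.mp this
    exact hj ▸ hd0 j
  have hposcard : (Finset.univ.filter (fun k => 0 < dv k)).card = i + 1 := by
    have : (Finset.univ.filter (fun k => 0 < dv k)) = Finset.Iic i := by
      ext k; simp [hdpos k]
    rw [this, Fin.card_Iic]
  have hA : 0 < g i.rev := by
    by_contra hle
    push_neg at hle
    have hsub : (Finset.univ.filter (fun k => 0 < g k)) ⊆ Finset.Ioi i.rev := by
      intro k hk
      rw [Finset.mem_filter] at hk
      rw [Finset.mem_Ioi]
      by_contra hk2
      push_neg at hk2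
      exact absurd (lt_of_lt_of_le hk.2 ((hg hk2).trans hle)) (lt_irrefl 0)
    have hcard := Finset.card_le_card hsub
    rw [hcount (fun x => 0 < x), hposcard, Fin.card_Ioi] at hcard
    have : (i.rev : ℕ) = n - 1 - i := by simp [Fin.rev]; omega
    have hi : (i : ℕ) < n := i.isLt
    omega
  have hB : ∀ j ∈ Finset.Iic i, g i.rev ≤ dv j := by
    intro j hj
    by_contra hlt
    push_neg at hlt
    set t := g i.rev with ht
    have hsub1 : Finset.Ici i.rev ⊆ Finset.univ.filter (fun k => t ≤ g k) := by
      intro k hk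
      rw [Finset.mem_Ici] at hk
      exact Finset.mem_filter.mpr ⟨Finset.mem_univ _, hg hk⟩
    have hsub2 : Finset.univ.filter (fun k => t ≤ dv k) ⊆ (Finset.Iic i).erase j := by
      intro k hk
      rw [Finset.mem_filter] at hk
      refine Finset.mem_erase.mpr
        ⟨?_, Finset.mem_Iic.mpr ((hdpos k).mp (lt_of_lt_of_le hA hk.2))⟩
      rintro rfl
      exact absurd (lt_of_le_of_lt hk.2 hlt) (lt_irrefl _)
    have h1 := Finset.card_le_card hsub1
    have h2 := Finset.card_le_card hsub2
    rw [Fin.card_Ici] at h1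
    rw [Finset.card_erase_of_mem hj, Fin.card_Iic] at h2
    rw [hcount (fun x => t ≤ x)] at h1
    have : (i.rev : ℕ) = n - 1 - i := by simp [Fin.rev]; omega
    have hi : (i : ℕ) < n := i.isLt
    omega
  have hC : ∃ k ∈ Finset.Iic i, dv k = g i.rev := by
    have : g i.rev ∈ Multiset.map dv Finset.univ.val := by
      rw [← hm]; exact Multiset.mem_map_of_mem _ (Finset.mem_univ_val _)
    obtain ⟨k, -, hk⟩ := Multiset.mem_map.mp this
    exact ⟨k, Finset.mem_Iic.mpr ((hdpos k).mp (hk ▸ hA)), hk⟩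
  obtain ⟨k, hkmem, hk⟩ := hC
  exact le_antisymm (Finset.le_inf' _ _ hB) (hk ▸ Finset.inf'_le _ hkmem)

theorem mulVec_anti' {r : ℕ} (i : Fin r) (v : Fin r → ℂ) (k : Fin r) :
    ((Matrix.of (fun k l : Fin r => if k.val + l.val = i.val then (1 : ℂ) else 0)) *ᵥ v) k
      = if k.val ≤ i.val then v (isub i k) else 0 := by
  simp only [Matrix.mulVec, dotProduct, Matrix.of_apply, ite_mul, one_mul, zero_mul]
  by_cases hk : k.val ≤ i.val
  · have hcond : ∀ l : Fin r, (k.val + l.val = i.val) ↔ (l = isub i k) := by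
      intro l
      rw [Fin.ext_iff]
      show k.val + l.val = i.val ↔ l.val = i.val - k.val
      omega
    simp only [hcond]
    rw [Finset.sum_ite_eq' Finset.univ (isub i k) v]
    simp [hk]
  · have hcond : ∀ l : Fin r, ¬(k.val + l.val = i.val) := fun l => by omega
    simp [hcond, hk]

theorem specnorm_anti_le' {r : ℕ} (i : Fin r) :
    ‖LinearMap.toContinuousLinearMap (Matrix.toEuclideanLin
      (Matrix.of (fun k l : Fin r => if k.val + l.val = i.val then (1 : ℂ) else 0)))‖ ≤ 1 := by
  apply ContinuousLinearMap.opNorm_le_bound _ zero_le_one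
  intro x
  rw [one_mul, LinearMap.coe_toContinuousLinearMap']
  rw [EuclideanSpace.norm_eq, EuclideanSpace.norm_eq]
  apply Real.sqrt_le_sqrt
  have happ : ∀ k : Fin r, (Matrix.toEuclideanLin
      (Matrix.of (fun k l : Fin r => if k.val + l.val = i.val then (1 : ℂ) else 0)) x) k
      = if k.val ≤ i.val then x (isub i k) else 0 := by
    intro k
    rw [Matrix.toEuclideanLin_apply]
    exact mulVec_anti' i _ k
  calc ∑ k : Fin r, ‖(Matrix.toEuclideanLin
      (Matrix.of (fun k l : Fin r => if k.val + l.val = i.val then (1 : ℂ) else 0)) x) k‖ ^ 2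
      = ∑ k : Fin r, (if k ∈ Finset.Iic i then ‖x (isub i k)‖ ^ 2 else 0) := by
        refine Finset.sum_congr rfl fun k _ => ?_
        rw [happ k]
        by_cases hk : k.val ≤ i.val
        · rw [if_pos hk, if_pos (Finset.mem_Iic.mpr (Fin.le_def.mpr hk))]
        · rw [if_neg hk, if_neg (fun h => hk (Fin.le_def.mp (Finset.mem_Iic.mp h)))]
          simp
    _ = ∑ k ∈ Finset.Iic i, ‖x (isub i k)‖ ^ 2 := by
        rw [Finset.sum_ite_mem, Finset.univ_inter]
    _ = ∑ j ∈ Finset.Iic i, ‖x j‖ ^ 2 := by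
        refine Finset.sum_nbij' (fun k => isub i k) (fun k => isub i k) ?_ ?_ ?_ ?_ ?_
        · intro a ha
          exact Finset.mem_Iic.mpr (Fin.le_def.mpr (Nat.sub_le _ _))
        · intro a ha
          exact Finset.mem_Iic.mpr (Fin.le_def.mpr (Nat.sub_le _ _))
        · intro a ha
          have h := Fin.le_def.mp (Finset.mem_Iic.mp ha)
          apply Fin.ext
          show i.val - (i.val - a.val) = a.val
          omega
        · intro a ha
          have h := Fin.le_def.mp (Finset.mem_Iic.mp ha)
          apply Fin.ext
          show i.val - (i.val - a.val) = a.val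
          omega
        · intro a ha
          rfl
    _ ≤ ∑ j : Fin r, ‖x j‖ ^ 2 := by
        apply Finset.sum_le_sum_of_subset_of_nonneg (Finset.subset_univ _)
        intros
        positivity

end Aux

/-- Attainability: the Hermitian matrix which is zero except for an anti-diagonal leading
`i × i` block has spectral norm at most `1` and attains `σ_i(DHD) = min_j √(σ_j σ_{i-j+1})`. -/
theorem sval_DHD_pairMin_attained {r : ℕ} (σ : Fin r → ℝ) (hσ : Antitone σ)
    (hpos : ∀ j, 0 < σ j) (i : Fin r) :
    ∃ H : Matrix (Fin r) (Fin r) ℂ, H.IsHermitian ∧ specNorm H ≤ 1 ∧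
      H = Matrix.of (fun k l : Fin r => if k.val + l.val = i.val then (1 : ℂ) else 0) ∧
      sval (Matrix.diagonal (fun j => (Real.sqrt (σ j) : ℂ)) * H *
        Matrix.diagonal (fun j => (Real.sqrt (σ j) : ℂ))) i = pairMin σ i := by
  classical
  set a : Fin r → ℂ := fun j => (Real.sqrt (σ j) : ℂ) with ha
  set H : Matrix (Fin r) (Fin r) ℂ :=
    Matrix.of (fun k l : Fin r => if k.val + l.val = i.val then (1 : ℂ) else 0) with hHdef
  set dv : Fin r → ℝ := fun l => if l.val ≤ i.val then σ l * σ (isub i l) else 0 with hdv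
  set M : Matrix (Fin r) (Fin r) ℂ := Matrix.diagonal a * H * Matrix.diagonal a with hMdef
  have hHherm : H.IsHermitian := by
    ext k l
    simp only [Matrix.conjTranspose_apply, hHdef, Matrix.of_apply]
    rw [Nat.add_comm l.val k.val]
    split <;> simp
  have hMe : ∀ k l : Fin r, M k l = a k * (if k.val + l.val = i.val then (1 : ℂ) else 0) * a l := by
    intro k l
    rw [hMdef, Matrix.mul_diagonal, Matrix.diagonal_mul]
    rfl
  have hM : Mᴴ * M = Matrix.diagonal (fun l => (dv l : ℂ)) := by
    ext l l'
    rw [Matrix.mul_apply]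
    simp only [Matrix.conjTranspose_apply]
    by_cases hl : l.val ≤ i.val
    · have hcond : ∀ k : Fin r, (k.val + l.val = i.val) ↔ (k = isub i l) := by
        intro k
        rw [Fin.ext_iff]
        show k.val + l.val = i.val ↔ k.val = i.val - l.val
        omega
      rw [Finset.sum_eq_single (isub i l)]
      · have hk0 : (isub i l).val + l.val = i.val := by
          show i.val - l.val + l.val = i.val
          omega
        rw [hMe, hMe, if_pos hk0]
        by_cases hl' : l' = l
        · rw [hl', if_pos hk0, Matrix.diagonal_apply_eq]
          have hdvl : dv l = σ l * σ (isub i l) := if_pos hl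
          rw [hdvl]
          simp only [mul_one, ha]
          rw [← Complex.ofReal_mul, Complex.star_def, Complex.conj_ofReal, ← Complex.ofReal_mul]
          congr 1
          rw [mul_mul_mul_comm, Real.mul_self_sqrt (hpos _).le, Real.mul_self_sqrt (hpos _).le,
            mul_comm]
        · have hne : ¬((isub i l).val + l'.val = i.val) := by
            intro h
            apply hl'
            apply Fin.ext
            have h0 : i.val - l.val + l.val = i.val := by omega
            omega
          rw [if_neg hne, Matrix.diagonal_apply_ne' _ hl']
          ring
      · intro k _ hk
        rw [hMe, if_neg (fun h => hk ((hcond k).mp h))]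
        simp
      · intro h
        exact absurd (Finset.mem_univ _) h
    · have hall : ∀ k : Fin r, ¬(k.val + l.val = i.val) := fun k h => hl (by omega)
      have hzero : ∀ k : Fin r, star (M k l) * M k l' = 0 := by
        intro k
        rw [hMe, if_neg (hall k)]
        simp
      rw [Finset.sum_congr rfl (fun k _ => hzero k), Finset.sum_const_zero]
      have hdl : dv l = 0 := by rw [hdv]; simp [hl]
      by_cases hl' : l = l'
      · subst hl'; rw [Matrix.diagonal_apply_eq, hdl]; simp
      · rw [Matrix.diagonal_apply_ne _ hl']
  refine ⟨H, hHherm, ?_, rfl, ?_⟩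
  · rw [specNorm, hHdef]
    exact specnorm_anti_le' i
  · -- the singular value computation
    have hHerm2 : (Matrix.diagonal (fun l => (dv l : ℂ))).IsHermitian :=
      hM ▸ Matrix.isHermitian_conjTranspose_mul_self M
    have he : (Matrix.isHermitian_conjTranspose_mul_self M).eigenvalues = hHerm2.eigenvalues :=
      eigs_congr' hM _ _
    rw [sval, he]
    set e : Fin r → ℝ := hHerm2.eigenvalues with hedef
    set π : Equiv.Perm (Fin r) := Tuple.sort e with hπ
    have hd0 : ∀ k, 0 ≤ dv k := by
      intro k
      rw [hdv]
      dsimp only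
      split
      · exact (mul_pos (hpos _) (hpos _)).le
      · exact le_rfl
    have hdposiff : ∀ k, 0 < dv k ↔ k ≤ i := by
      intro k
      rw [hdv]
      dsimp only
      constructor
      · intro h
        by_contra hk
        rw [if_neg (fun h2 => hk (Fin.le_def.mpr h2))] at h
        exact lt_irrefl 0 h
      · intro hk
        rw [if_pos (Fin.le_def.mp hk)]
        exact mul_pos (hpos _) (hpos _)
    have hmulset : Multiset.map (e ∘ ⇑π) Finset.univ.val = Multiset.map dv Finset.univ.val := by
      have h1 : Multiset.map (⇑π) Finset.univ.val = Finset.univ.val := by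
        have := congrArg Finset.val (Finset.map_univ_equiv π)
        rw [Finset.map_val] at this
        exact this
      calc Multiset.map (e ∘ ⇑π) Finset.univ.val
          = Multiset.map e (Multiset.map (⇑π) Finset.univ.val) := by
            rw [Multiset.map_map]
        _ = Multiset.map e Finset.univ.val := by rw [h1]
        _ = Multiset.map dv Finset.univ.val := eig_diagonal_multiset' dv hHerm2
    have hkey : (e ∘ ⇑π) i.rev
        = (Finset.Iic i).inf' ⟨i, Finset.mem_Iic.mpr le_rfl⟩ dv :=
      monotone_multiset_rev_min' (e ∘ ⇑π) dv (Tuple.monotone_sort e) hmulset i hd0 hdposiff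
    have hgoal : e (π i.rev) = (Finset.Iic i).inf' ⟨i, Finset.mem_Iic.mpr le_rfl⟩ dv := hkey
    rw [hgoal, pairMin]
    have hcongr : ∀ j ∈ Finset.Iic i, Real.sqrt (σ j * σ (isub i j)) = Real.sqrt (dv j) := by
      intro j hj
      rw [hdv]
      dsimp only
      rw [if_pos (Fin.le_def.mp (Finset.mem_Iic.mp hj))]
    refine Eq.trans ?_ (Finset.inf'_congr _ rfl hcongr).symm
    obtain ⟨k0, hk0m, hk0⟩ := Finset.exists_mem_eq_inf' ⟨i, Finset.mem_Iic.mpr le_rfl⟩ dv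
    apply le_antisymm
    · apply Finset.le_inf'
      intro j hj
      exact Real.sqrt_le_sqrt (Finset.inf'_le _ hj)
    · rw [hk0]
      exact Finset.inf'_le _ hk0m
end

section
/- Let σ₁ ≥ … ≥ σ_r > 0, D = diag(√σ₁, …, √σ_r), and let H be Hermitian with ‖H‖₂ ≤ 1. For every 1 ≤ i ≤ r and every Q ∈ ℂ^{r×i} with orthonormal columns, there exists a unit vector v ∈ ℂ^i such that ‖DHDQv‖₂ ≤ min_{1 ≤ j ≤ i} √(σ_j σ_{i−j+1}). -/
open Matrix Finset

lemma eucl_norm_sq {m : ℕ} (x : EuclideanSpace ℂ (Fin m)) : ‖x‖ ^ 2 = ∑ k, ‖x k‖ ^ 2 := by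
  rw [EuclideanSpace.norm_eq, Real.sq_sqrt (by positivity)]

lemma star_dot_self (m : ℕ) (x : Fin m → ℂ) : star x ⬝ᵥ x = ((∑ k, ‖x k‖ ^ 2 : ℝ) : ℂ) := by
  push_cast
  simp only [dotProduct, Pi.star_apply]
  refine Finset.sum_congr rfl fun k _ => ?_
  rw [Complex.star_def, ← Complex.normSq_eq_conj_mul_self, Complex.normSq_eq_norm_sq]
  norm_cast

lemma sum_sigma_le {r : ℕ} (σ : Fin r → ℝ) (hσ : Antitone σ) (hpos : ∀ k, 0 < σ k)
    (t : Fin r) (y : Fin r → ℂ) (hy : ∀ k : Fin r, k.val < t.val → y k = 0) :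
    ∑ k, σ k * ‖y k‖ ^ 2 ≤ σ t * ∑ k, ‖y k‖ ^ 2 := by
  rw [Finset.mul_sum]
  refine Finset.sum_le_sum fun k _ => ?_
  by_cases hk : k.val < t.val
  · simp [hy k hk]
  · exact mul_le_mul_of_nonneg_right (hσ (Fin.le_def.mpr (not_lt.mp hk))) (by positivity)

/-- Key step: for Hermitian `H` with `‖H‖₂ ≤ 1` and any `Q` with orthonormal columns,
there is a unit vector `v` with `‖DHDQv‖₂ ≤ min_{1 ≤ j ≤ i} √(σ_j σ_{i-j+1})`. -/
theorem exists_unit_vector_small_image {r : ℕ} (σ : Fin r → ℝ) (hσ : Antitone σ)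
    (hpos : ∀ j, 0 < σ j) (H : Matrix (Fin r) (Fin r) ℂ) (hH : H.IsHermitian)
    (hnorm : specNorm H ≤ 1) (i : Fin r)
    (Q : Matrix (Fin r) (Fin (i.val + 1)) ℂ) (hQ : Qᴴ * Q = 1) :
    ∃ v : EuclideanSpace ℂ (Fin (i.val + 1)), ‖v‖ = 1 ∧
      ‖Matrix.toEuclideanLin
        (Matrix.diagonal (fun j => (Real.sqrt (σ j) : ℂ)) * H *
          Matrix.diagonal (fun j => (Real.sqrt (σ j) : ℂ)) * Q) v‖ ≤ pairMin σ i := by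
  classical
  set D : Matrix (Fin r) (Fin r) ℂ := Matrix.diagonal (fun j => (Real.sqrt (σ j) : ℂ)) with hD
  set M : Matrix (Fin r) (Fin (i.val + 1)) ℂ := D * H * D * Q with hM
  -- minimize ‖toEuclideanLin M v‖ on the unit sphere
  have hsph : (Metric.sphere (0 : EuclideanSpace ℂ (Fin (i.val + 1))) 1).Nonempty :=
    NormedSpace.sphere_nonempty.mpr zero_le_one
  have hcont : Continuous fun v : EuclideanSpace ℂ (Fin (i.val + 1)) =>
      ‖Matrix.toEuclideanLin M v‖ :=
    ((Matrix.toEuclideanLin M).continuous_of_finiteDimensional).norm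
  obtain ⟨v, hvmem, hvmin⟩ :=
    (isCompact_sphere (0 : EuclideanSpace ℂ (Fin (i.val + 1))) 1).exists_isMinOn hsph
      hcont.continuousOn
  have hv1 : ‖v‖ = 1 := by simpa using mem_sphere_zero_iff_norm.mp hvmem
  refine ⟨v, hv1, ?_⟩
  refine Finset.le_inf' _ _ fun j hj => ?_
  have hji : j.val ≤ i.val := Fin.le_def.mp (Finset.mem_Iic.mp hj)
  -- construct a nonzero vector in the kernel of the constraints
  set t : Fin r := isub i j with ht
  have htval : t.val = i.val - j.val := rfl
  let L1 : EuclideanSpace ℂ (Fin (i.val + 1)) →ₗ[ℂ] (Fin j.val → ℂ) :=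
    (LinearMap.funLeft ℂ ℂ (Fin.castLE j.isLt.le)) ∘ₗ (Matrix.mulVecLin (H * D * Q)) ∘ₗ
      (WithLp.linearEquiv 2 ℂ (Fin (i.val + 1) → ℂ)).toLinearMap
  let L2 : EuclideanSpace ℂ (Fin (i.val + 1)) →ₗ[ℂ] (Fin t.val → ℂ) :=
    (LinearMap.funLeft ℂ ℂ (Fin.castLE t.isLt.le)) ∘ₗ (Matrix.mulVecLin Q) ∘ₗ
      (WithLp.linearEquiv 2 ℂ (Fin (i.val + 1) → ℂ)).toLinearMap
  let L := L1.prod L2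
  have hker : ∃ w : EuclideanSpace ℂ (Fin (i.val + 1)), w ≠ 0 ∧ L w = 0 := by
    have hnotinj : ¬ Function.Injective L := by
      intro hinj
      have hle := LinearMap.finrank_le_finrank_of_injective hinj
      have h1 : Module.finrank ℂ (EuclideanSpace ℂ (Fin (i.val + 1))) = i.val + 1 := by
        simp [EuclideanSpace]
      have h2 : Module.finrank ℂ ((Fin j.val → ℂ) × (Fin t.val → ℂ)) = j.val + t.val := by
        simp
      rw [h1, h2, htval] at hle
      omega
    have : LinearMap.ker L ≠ ⊥ := fun h => hnotinj (LinearMap.ker_eq_bot.mp h)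
    obtain ⟨w, hw, hw0⟩ := Submodule.ne_bot_iff _ |>.mp this
    exact ⟨w, hw0, hw⟩
  obtain ⟨w, hw0, hwker⟩ := hker
  have hwpos : (0:ℝ) < ‖w‖ := norm_pos_iff.mpr hw0
  -- the two vanishing conditions
  have hy0 : ∀ k : Fin r, k.val < j.val → ((H * D * Q) *ᵥ ⇑w) k = 0 := by
    intro k hk
    have := congrArg Prod.fst hwker
    have h2 := congrFun this ⟨k.val, hk⟩
    simpa [L, L1, LinearMap.funLeft, Matrix.mulVecLin, Fin.castLE,
      Fin.ext_iff, Matrix.mul_assoc] using h2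
  have hq0 : ∀ k : Fin r, k.val < t.val → (Q *ᵥ ⇑w) k = 0 := by
    intro k hk
    have := congrArg Prod.snd hwker
    have h2 := congrFun this ⟨k.val, hk⟩
    simpa [L, L2, LinearMap.funLeft, Matrix.mulVecLin, Fin.castLE,
      Fin.ext_iff] using h2
  -- norms of the pieces
  set y : Fin r → ℂ := (H * D * Q) *ᵥ ⇑w with hy
  set q : Fin r → ℂ := Q *ᵥ ⇑w with hqdef
  -- ‖Q w‖² = ‖w‖²
  have hQw : ∑ k, ‖q k‖ ^ 2 = ∑ k, ‖w k‖ ^ 2 := by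
    have : star q ⬝ᵥ q = star ⇑w ⬝ᵥ ⇑w := by
      rw [hqdef, star_mulVec, ← Matrix.dotProduct_mulVec, Matrix.mulVec_mulVec, hQ,
        Matrix.one_mulVec]
    rw [star_dot_self, star_dot_self] at this
    exact_mod_cast this
  -- ‖D q‖² ≤ σ t ‖w‖²
  have hDq : ∑ k, ‖(D *ᵥ q) k‖ ^ 2 ≤ σ t * ∑ k, ‖w k‖ ^ 2 := by
    rw [← hQw]
    calc ∑ k, ‖(D *ᵥ q) k‖ ^ 2 = ∑ k, σ k * ‖q k‖ ^ 2 := by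
          refine Finset.sum_congr rfl fun k _ => ?_
          rw [hD, Matrix.mulVec_diagonal, norm_mul, mul_pow, Complex.norm_real,
            Real.norm_eq_abs, abs_of_nonneg (Real.sqrt_nonneg _),
            Real.sq_sqrt (hpos k).le]
      _ ≤ _ := sum_sigma_le σ hσ hpos t q hq0
  -- ‖H (D q)‖ ≤ ‖D q‖, in sum of squares form
  have hHDq : ∑ k, ‖(H *ᵥ (D *ᵥ q)) k‖ ^ 2 ≤ ∑ k, ‖(D *ᵥ q) k‖ ^ 2 := by
    set z : EuclideanSpace ℂ (Fin r) := (WithLp.equiv 2 (Fin r → ℂ)).symm (D *ᵥ q) with hz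
    have h1 : ‖Matrix.toEuclideanLin H z‖ ≤ ‖z‖ := by
      have := (LinearMap.toContinuousLinearMap (Matrix.toEuclideanLin H)).le_opNorm z
      calc ‖Matrix.toEuclideanLin H z‖
          = ‖LinearMap.toContinuousLinearMap (Matrix.toEuclideanLin H) z‖ := rfl
        _ ≤ specNorm H * ‖z‖ := this
        _ ≤ 1 * ‖z‖ := by
            exact mul_le_mul_of_nonneg_right hnorm (norm_nonneg _)
        _ = ‖z‖ := one_mul _
    have h2 := pow_le_pow_left₀ (norm_nonneg _) h1 2
    rw [eucl_norm_sq, eucl_norm_sq] at h2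
    have he : ∀ k, (Matrix.toEuclideanLin H z) k = (H *ᵥ (D *ᵥ q)) k := fun k => rfl
    have hz' : ∀ k, z k = (D *ᵥ q) k := fun k => rfl
    simpa [he, hz'] using h2
  -- final: ‖M w‖² ≤ σ j σ t ‖w‖²
  have hMw : ‖Matrix.toEuclideanLin M w‖ ^ 2 ≤ σ j * σ t * ‖w‖ ^ 2 := by
    have hMy : ∀ k, (Matrix.toEuclideanLin M w) k = (D *ᵥ y) k := by
      intro k
      have : M *ᵥ ⇑w = D *ᵥ y := by
        rw [hM, hy]
        simp [Matrix.mulVec_mulVec, Matrix.mul_assoc]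
      exact congrFun this k ▸ rfl
    rw [eucl_norm_sq, eucl_norm_sq]
    calc ∑ k, ‖(Matrix.toEuclideanLin M w) k‖ ^ 2 = ∑ k, σ k * ‖y k‖ ^ 2 := by
          refine Finset.sum_congr rfl fun k _ => ?_
          rw [hMy k, hD, Matrix.mulVec_diagonal, norm_mul, mul_pow, Complex.norm_real,
            Real.norm_eq_abs, abs_of_nonneg (Real.sqrt_nonneg _),
            Real.sq_sqrt (hpos k).le]
      _ ≤ σ j * ∑ k, ‖y k‖ ^ 2 := sum_sigma_le σ hσ hpos j y hy0
      _ ≤ σ j * (σ t * ∑ k, ‖w k‖ ^ 2) := by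
          refine mul_le_mul_of_nonneg_left ?_ (hpos j).le
          have hy2 : ∀ k, y k = (H *ᵥ (D *ᵥ q)) k := by
            intro k
            rw [hy, hqdef, Matrix.mulVec_mulVec, Matrix.mulVec_mulVec, Matrix.mul_assoc]
          calc ∑ k, ‖y k‖ ^ 2 = ∑ k, ‖(H *ᵥ (D *ᵥ q)) k‖ ^ 2 := by
                refine Finset.sum_congr rfl fun k _ => by rw [hy2 k]
            _ ≤ ∑ k, ‖(D *ᵥ q) k‖ ^ 2 := hHDq
            _ ≤ σ t * ∑ k, ‖w k‖ ^ 2 := hDq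
      _ = σ j * σ t * ∑ k, ‖w k‖ ^ 2 := by ring
  -- normalize w and conclude
  set u : EuclideanSpace ℂ (Fin (i.val + 1)) := (‖w‖⁻¹ : ℂ) • w with hu
  have hu1 : ‖u‖ = 1 := by
    rw [hu, norm_smul]
    simp [norm_inv, hwpos.ne']
  have humem : u ∈ Metric.sphere (0 : EuclideanSpace ℂ (Fin (i.val + 1))) 1 :=
    mem_sphere_zero_iff_norm.mpr hu1
  have hmin := hvmin humem
  have hTu : ‖Matrix.toEuclideanLin M u‖ ^ 2 ≤ σ j * σ t := by
    have : Matrix.toEuclideanLin M u = (‖w‖⁻¹ : ℂ) • Matrix.toEuclideanLin M w := by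
      rw [hu]; exact LinearMap.map_smul _ _ _
    rw [this, norm_smul, mul_pow]
    have hninv : ‖(‖w‖⁻¹ : ℂ)‖ ^ 2 = (‖w‖ ^ 2)⁻¹ := by
      rw [norm_inv, Complex.norm_real, Real.norm_eq_abs, abs_of_nonneg (norm_nonneg w),
        inv_pow]
    rw [hninv]
    rw [inv_mul_le_iff₀ (by positivity)]
    calc ‖Matrix.toEuclideanLin M w‖ ^ 2 ≤ σ j * σ t * ‖w‖ ^ 2 := hMw
      _ = ‖w‖ ^ 2 * (σ j * σ t) := by ring
  have : ‖Matrix.toEuclideanLin M v‖ ≤ ‖Matrix.toEuclideanLin M u‖ := hmin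
  refine le_trans this ?_
  rw [show σ j * σ (isub i j) = σ j * σ t from rfl]
  rw [← Real.sqrt_sq (norm_nonneg (Matrix.toEuclideanLin M u))]
  exact Real.sqrt_le_sqrt hTu
end

section
/- Let Σ = diag(σ₁, …, σ_r) with σ₁ ≥ … ≥ σ_r > 0. For every 1 ≤ i ≤ r there exists X ∈ ℂ^{r×r} with ‖X‖₂ ≤ 1 such that ΣX has at least i eigenvalues all of modulus exactly (∏_{j=1}^i σ_j)^{1/i}. -/
open Matrix Finset

/-- cyclic successor on `{0, …, i}` (junk elsewhere). -/
def sunCyc {r : ℕ} (i : Fin r) : Fin r → Fin r :=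
  fun j => if j = i then ⟨0, i.pos⟩ else ⟨(j.val + 1) % r, Nat.mod_lt _ i.pos⟩

lemma sunCyc_self {r : ℕ} (i : Fin r) : sunCyc i i = ⟨0, i.pos⟩ := by simp [sunCyc]

lemma sunCyc_lt {r : ℕ} (i : Fin r) (j : Fin r) (hj : j.val < i.val) :
    sunCyc i j = ⟨j.val + 1, by have := i.isLt; omega⟩ := by
  have hji : j ≠ i := fun h => by simp [h] at hj
  simp only [sunCyc, if_neg hji]
  congr 1
  exact Nat.mod_eq_of_lt (by have := i.isLt; omega)

lemma sunCyc_inj {r : ℕ} (i : Fin r) : ∀ a ∈ Finset.Iic i, ∀ b ∈ Finset.Iic i,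
    sunCyc i a = sunCyc i b → a = b := by
  intro a ha b hb hab
  rw [Finset.mem_Iic] at ha hb
  by_cases hai : a = i
  · by_cases hbi : b = i
    · rw [hai, hbi]
    · have hb' : b.val < i.val := lt_of_le_of_ne hb (fun h => hbi (Fin.ext h))
      rw [hai, sunCyc_self, sunCyc_lt i b hb'] at hab
      exact absurd (congrArg Fin.val hab) (by simp)
  · have ha' : a.val < i.val := lt_of_le_of_ne ha (fun h => hai (Fin.ext h))
    by_cases hbi : b = i
    · rw [hbi, sunCyc_self, sunCyc_lt i a ha'] at hab
      exact absurd (congrArg Fin.val hab) (by simp)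
    · have hb' : b.val < i.val := lt_of_le_of_ne hb (fun h => hbi (Fin.ext h))
      rw [sunCyc_lt i a ha', sunCyc_lt i b hb'] at hab
      have h5 := congrArg Fin.val hab
      simp only at h5
      exact Fin.ext (by omega)

/-- the partial cyclic permutation matrix. -/
def sunX {r : ℕ} (i : Fin r) : Matrix (Fin r) (Fin r) ℂ :=
  Matrix.of fun j k => if j ≤ i then (if k = sunCyc i j then 1 else 0) else 0

lemma sunX_mulVec {r : ℕ} (i : Fin r) (v : Fin r → ℂ) (j : Fin r) :
    (sunX i *ᵥ v) j = if j ≤ i then v (sunCyc i j) else 0 := by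
  simp only [Matrix.mulVec, dotProduct, sunX, Matrix.of_apply]
  by_cases h : j ≤ i
  · simp [h]
  · simp [h]

set_option maxHeartbeats 1000000 in
lemma specNorm_sunX_le {r : ℕ} (i : Fin r) : specNorm (sunX i) ≤ 1 := by
  rw [specNorm]
  refine ContinuousLinearMap.opNorm_le_bound _ zero_le_one fun v => ?_
  rw [one_mul]
  have hv : (LinearMap.toContinuousLinearMap (toEuclideanLin (sunX i))) v
      = (WithLp.equiv 2 (Fin r → ℂ)).symm (sunX i *ᵥ (WithLp.equiv 2 (Fin r → ℂ)) v) := rfl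
  rw [hv, EuclideanSpace.norm_eq, EuclideanSpace.norm_eq]
  set w : Fin r → ℂ := (WithLp.equiv 2 (Fin r → ℂ)) v with hw
  apply Real.sqrt_le_sqrt
  have hterm : ∀ j : Fin r, ‖((WithLp.equiv 2 (Fin r → ℂ)).symm (sunX i *ᵥ w)) j‖ ^ 2
      = if j ≤ i then ‖w (sunCyc i j)‖ ^ 2 else 0 := by
    intro j
    have h0 : ((WithLp.equiv 2 (Fin r → ℂ)).symm (sunX i *ᵥ w)) j = (sunX i *ᵥ w) j := rfl
    rw [h0, sunX_mulVec i w j]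
    by_cases h : j ≤ i <;> simp [h]
  calc ∑ j : Fin r, ‖((WithLp.equiv 2 (Fin r → ℂ)).symm (sunX i *ᵥ w)) j‖ ^ 2
      = ∑ j ∈ Finset.Iic i, ‖w (sunCyc i j)‖ ^ 2 := by
        rw [Finset.sum_congr rfl (fun j _ => hterm j)]
        rw [← Finset.sum_subset (Finset.subset_univ (Finset.Iic i))]
        · exact Finset.sum_congr rfl (fun j hj => by simp [Finset.mem_Iic.mp hj])
        · intro x _ hx
          simp [Finset.mem_Iic.not.mp hx]
    _ = ∑ k ∈ (Finset.Iic i).image (sunCyc i), ‖w k‖ ^ 2 := by rw [Finset.sum_image (sunCyc_inj i)]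
    _ ≤ ∑ k : Fin r, ‖w k‖ ^ 2 := Finset.sum_le_sum_of_subset_of_nonneg
          (Finset.subset_univ _) (fun k _ _ => by positivity)
    _ = ∑ k : Fin r, ‖v k‖ ^ 2 := rfl

lemma sun_isRoot {r : ℕ} (σ : Fin r → ℝ) (hpos : ∀ j, 0 < σ j) (i : Fin r) (μ : ℂ)
    (hμ : μ ^ (i.val + 1) = ∏ k ∈ Finset.Iic i, (σ k : ℂ)) :
    ((Matrix.diagonal (fun j => (σ j : ℂ)) * sunX i).charpoly).IsRoot μ := by
  have hr : 0 < r := i.pos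
  have hσC : ∀ k : Fin r, (σ k : ℂ) ≠ 0 := fun k => Complex.ofReal_ne_zero.mpr (hpos k).ne'
  have hprodC : ∀ s : Finset (Fin r), (∏ l ∈ s, (σ l : ℂ)) ≠ 0 :=
    fun s => Finset.prod_ne_zero_iff.mpr (fun l _ => hσC l)
  set M : Matrix (Fin r) (Fin r) ℂ := Matrix.diagonal (fun j => (σ j : ℂ)) * sunX i with hM
  set v : Fin r → ℂ := fun k => if k ≤ i then μ ^ k.val / ∏ l ∈ Finset.Iio k, (σ l : ℂ) else 0
    with hvdef
  have hIio0 : Finset.Iio (⟨0, hr⟩ : Fin r) = ∅ := by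
    ext k; simp only [Finset.mem_Iio, Fin.lt_def, Finset.notMem_empty, iff_false]; omega
  have hle0 : (⟨0, hr⟩ : Fin r) ≤ i := by simp only [Fin.le_def]; omega
  have hv0 : v ⟨0, hr⟩ = 1 := by
    show (if (⟨0, hr⟩ : Fin r) ≤ i then μ ^ (0 : ℕ) / ∏ l ∈ Finset.Iio (⟨0, hr⟩ : Fin r), (σ l : ℂ) else 0) = 1
    rw [if_pos hle0, hIio0]
    simp
  have hMv : M *ᵥ v = μ • v := by
    funext k
    rw [hM, ← Matrix.mulVec_mulVec, Matrix.mulVec_diagonal, sunX_mulVec]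
    by_cases hk : k ≤ i
    · by_cases hki : k = i
      · subst hki
        rw [if_pos le_rfl, sunCyc_self, hv0, mul_one]
        have hvk : v k = μ ^ k.val / ∏ l ∈ Finset.Iio k, (σ l : ℂ) := if_pos le_rfl
        rw [Pi.smul_apply, hvk, smul_eq_mul, ← mul_div_assoc, eq_div_iff (hprodC _),
          mul_comm μ (μ ^ k.val), ← pow_succ, hμ, ← Finset.Iio_insert,
          Finset.prod_insert (by simp)]
      · have hlt : k.val < i.val := lt_of_le_of_ne hk (fun h => hki (Fin.ext h))
        rw [if_pos hk, sunCyc_lt i k hlt]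
        have hle : (⟨k.val + 1, by have := i.isLt; omega⟩ : Fin r) ≤ i := by
          simp only [Fin.le_def]; omega
        have hIio : Finset.Iio (⟨k.val + 1, by have := i.isLt; omega⟩ : Fin r)
            = insert k (Finset.Iio k) := by
          rw [Finset.Iio_insert]
          ext l
          simp only [Finset.mem_Iio, Finset.mem_Iic, Fin.lt_def, Fin.le_def]
          omega
        have hvc : v ⟨k.val + 1, by have := i.isLt; omega⟩
            = μ ^ (k.val + 1) / ∏ l ∈ insert k (Finset.Iio k), (σ l : ℂ) := by
          rw [hvdef]
          simp only [if_pos hle, hIio]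
        have hvk : v k = μ ^ k.val / ∏ l ∈ Finset.Iio k, (σ l : ℂ) := if_pos hk
        rw [hvc, Pi.smul_apply, hvk, smul_eq_mul, Finset.prod_insert (by simp)]
        have h1 := hprodC (Finset.Iio k)
        have h2 := hσC k
        field_simp
        ring
    · rw [if_neg hk, Pi.smul_apply]
      have hvk : v k = 0 := if_neg hk
      rw [hvk, smul_eq_mul, mul_zero, mul_zero]
  have hvne : v ≠ 0 := by
    intro h
    have h1 := congrFun h ⟨0, hr⟩
    rw [hv0] at h1
    simp at h1
  have hdet : (Matrix.diagonal (fun _ : Fin r => μ) - M).det = 0 := by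
    rw [← Matrix.exists_mulVec_eq_zero_iff]
    refine ⟨v, hvne, ?_⟩
    rw [Matrix.sub_mulVec, hMv]
    funext k
    simp [Matrix.mulVec_diagonal]
  have hcharmap : (M.charmatrix).map (Polynomial.evalRingHom μ)
      = Matrix.diagonal (fun _ : Fin r => μ) - M := by
    ext a b
    by_cases hab : a = b
    · subst hab
      simp [Matrix.charmatrix_apply_eq]
    · simp [Matrix.charmatrix_apply_ne _ _ _ hab, Matrix.diagonal_apply_ne _ hab]
  show M.charpoly.eval μ = 0
  have h3 : M.charpoly.eval μ = (Polynomial.evalRingHom μ) M.charpoly := rfl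
  rw [h3, Matrix.charpoly, RingHom.map_det, RingHom.mapMatrix_apply, hcharmap, hdet]

/-- Attainability half of Sun's theorem: there is `X` with `‖X‖₂ ≤ 1` such that `Σ X` has
at least `i` eigenvalues (with multiplicity) of modulus exactly `(σ₁⋯σ_i)^{1/i}`. -/
theorem exists_X_eigenvalues_abs_eq {r : ℕ} (σ : Fin r → ℝ) (hσ : Antitone σ)
    (hpos : ∀ j, 0 < σ j) (i : Fin r) :
    ∃ X : Matrix (Fin r) (Fin r) ℂ, specNorm X ≤ 1 ∧
      ∃ e : Fin (i.val + 1) → ℂ,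
        Finset.univ.val.map e ≤ (Matrix.diagonal (fun j => (σ j : ℂ)) * X).charpoly.roots ∧
        ∀ j, ‖e j‖ = (∏ k ∈ Finset.Iic i, σ k) ^ ((i.val + 1 : ℝ)⁻¹) := by
  have hr : 0 < r := i.pos
  set n : ℕ := i.val + 1 with hn
  have hn0 : (n : ℝ) ≠ 0 := by positivity
  set P : ℝ := ∏ k ∈ Finset.Iic i, σ k with hP
  have hPpos : 0 < P := Finset.prod_pos fun k _ => hpos k
  set g : ℝ := P ^ ((n : ℝ)⁻¹) with hg
  have hgpos : 0 < g := Real.rpow_pos_of_pos hPpos _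
  have hgn : g ^ n = P := by
    rw [hg, ← Real.rpow_natCast (P ^ ((n:ℝ)⁻¹)) n, ← Real.rpow_mul hPpos.le,
      inv_mul_cancel₀ hn0, Real.rpow_one]
  set ζ : ℂ := Complex.exp (2 * Real.pi * Complex.I / n) with hζ
  have hprim : IsPrimitiveRoot ζ n := Complex.isPrimitiveRoot_exp n (by omega)
  have habsζ : ‖ζ‖ = 1 := by
    rw [hζ, Complex.norm_exp]
    norm_num [Complex.div_re]
  set e : Fin n → ℂ := fun j => (g : ℂ) * ζ ^ (j : ℕ) with he
  have hepow : ∀ j : Fin n, (e j) ^ n = (P : ℂ) := by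
    intro j
    rw [he]
    simp only [mul_pow, ← pow_mul]
    rw [mul_comm (j : ℕ) n, pow_mul, hprim.pow_eq_one, one_pow, mul_one,
      ← Complex.ofReal_pow, hgn]
  have heabs : ∀ j : Fin n, ‖e j‖ = g := by
    intro j
    rw [he]
    simp [norm_mul, norm_pow, habsζ, abs_of_pos hgpos]
  have heinj : Function.Injective e := by
    intro a b hab
    rw [he] at hab
    have hg0 : (g : ℂ) ≠ 0 := Complex.ofReal_ne_zero.mpr hgpos.ne'
    have h4 : ζ ^ (a : ℕ) = ζ ^ (b : ℕ) := mul_left_cancel₀ hg0 hab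
    exact Fin.ext (hprim.pow_inj a.isLt b.isLt h4)
  have hroot : ∀ j : Fin n, ((Matrix.diagonal (fun j => (σ j : ℂ)) * sunX i).charpoly).IsRoot (e j) := by
    intro j
    refine sun_isRoot σ hpos i (e j) ?_
    rw [← hn, hepow j, hP]
    push_cast
    rfl
  refine ⟨sunX i, specNorm_sunX_le i, e, ?_, ?_⟩
  · rw [Multiset.le_iff_subset (Multiset.Nodup.map heinj Finset.univ.nodup)]
    intro x hx
    rw [Multiset.mem_map] at hx
    obtain ⟨j, _, rfl⟩ := hx
    rw [Polynomial.mem_roots (Matrix.charpoly_monic _).ne_zero]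
    exact hroot j
  · intro j
    rw [heabs j, hg, hP]
    norm_num [hn]
end

section
/- Let B be an n×n Hermitian positive definite matrix, X₁ ∈ ℂ^{n×r} with X₁ᴴBX₁ = I_r, and let σ₁ ≥ … ≥ σ_r > 0 be the eigenvalues of X₁ᴴX₁. Then σ₁/σ_r ≤ κ₂(B), where κ₂(B) = λ_max(B)/λ_min(B) is the spectral condition number of B. Consequently the ratio of the largest to smallest condition number of a multiple eigenvalue of the definite pair (A,B) is bounded by κ₂(B). -/
open Matrix Finset
open scoped ComplexOrder

lemma aux_sub_posSemidef {n : ℕ} {A : Matrix (Fin n) (Fin n) ℂ} (hA : A.IsHermitian)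
    {c : ℝ} (h : ∀ i, c ≤ hA.eigenvalues i) :
    (A - (c : ℂ) • 1).PosSemidef := by
  have hU : (hA.eigenvectorUnitary : Matrix (Fin n) (Fin n) ℂ) *
      star (hA.eigenvectorUnitary : Matrix (Fin n) (Fin n) ℂ) = 1 :=
    (Matrix.mem_unitaryGroup_iff).mp hA.eigenvectorUnitary.2
  have hd : diagonal (fun i => ((hA.eigenvalues i - c : ℝ) : ℂ)) =
      diagonal (RCLike.ofReal ∘ hA.eigenvalues) - (c : ℂ) • 1 := by
    ext i j
    rcases eq_or_ne i j with rfl | hij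
    · simp [Matrix.one_apply_eq]
    · simp [Matrix.diagonal_apply_ne _ hij, Matrix.one_apply_ne hij]
  have key : (hA.eigenvectorUnitary : Matrix (Fin n) (Fin n) ℂ) *
      diagonal (fun i => ((hA.eigenvalues i - c : ℝ) : ℂ)) *
      star (hA.eigenvectorUnitary : Matrix (Fin n) (Fin n) ℂ) = A - (c : ℂ) • 1 := by
    rw [hd, mul_sub, sub_mul]
    conv_rhs => rw [hA.spectral_theorem, Unitary.conjStarAlgAut_apply]
    congr 1
    rw [mul_smul_comm, smul_mul_assoc, mul_one, hU]
  rw [← key, star_eq_conjTranspose]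
  refine PosSemidef.mul_mul_conjTranspose_same (PosSemidef.diagonal fun i => ?_) _
  simp only [Pi.zero_apply]
  exact_mod_cast sub_nonneg.mpr (h i)

lemma aux_smul_sub_posSemidef {n : ℕ} {A : Matrix (Fin n) (Fin n) ℂ} (hA : A.IsHermitian)
    {c : ℝ} (h : ∀ i, hA.eigenvalues i ≤ c) :
    ((c : ℂ) • 1 - A).PosSemidef := by
  have hU : (hA.eigenvectorUnitary : Matrix (Fin n) (Fin n) ℂ) *
      star (hA.eigenvectorUnitary : Matrix (Fin n) (Fin n) ℂ) = 1 :=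
    (Matrix.mem_unitaryGroup_iff).mp hA.eigenvectorUnitary.2
  have hd : diagonal (fun i => ((c - hA.eigenvalues i : ℝ) : ℂ)) =
      (c : ℂ) • 1 - diagonal (RCLike.ofReal ∘ hA.eigenvalues) := by
    ext i j
    rcases eq_or_ne i j with rfl | hij
    · simp [Matrix.one_apply_eq]
    · simp [Matrix.diagonal_apply_ne _ hij, Matrix.one_apply_ne hij]
  have key : (hA.eigenvectorUnitary : Matrix (Fin n) (Fin n) ℂ) *
      diagonal (fun i => ((c - hA.eigenvalues i : ℝ) : ℂ)) *
      star (hA.eigenvectorUnitary : Matrix (Fin n) (Fin n) ℂ) = (c : ℂ) • 1 - A := by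
    rw [hd, mul_sub, sub_mul]
    conv_rhs => rw [hA.spectral_theorem, Unitary.conjStarAlgAut_apply]
    congr 1
    rw [mul_smul_comm, smul_mul_assoc, mul_one, hU]
  rw [← key, star_eq_conjTranspose]
  refine PosSemidef.mul_mul_conjTranspose_same (PosSemidef.diagonal fun i => ?_) _
  simp only [Pi.zero_apply]
  exact_mod_cast sub_nonneg.mpr (h i)

/-- The ratio of the largest to smallest eigenvalue of `X₁ᴴ X₁` (the columns of `X₁` being
`B`-orthonormal) is bounded by the spectral condition number `κ₂(B) = λ_max(B)/λ_min(B)`. -/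
theorem eigenvalue_ratio_le_condB {n r : ℕ} (hr : 0 < r)
    (B : Matrix (Fin n) (Fin n) ℂ) (hB : B.PosDef)
    (X₁ : Matrix (Fin n) (Fin r) ℂ) (hX : X₁ᴴ * B * X₁ = 1) :
    (⨆ i, (Matrix.isHermitian_conjTranspose_mul_self X₁).eigenvalues i) /
        (⨅ i, (Matrix.isHermitian_conjTranspose_mul_self X₁).eigenvalues i) ≤
      (⨆ j, hB.isHermitian.eigenvalues j) / (⨅ j, hB.isHermitian.eigenvalues j) := by
  haveI : Nonempty (Fin r) := ⟨⟨0, hr⟩⟩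
  have hn : Nonempty (Fin n) := by
    rcases Nat.eq_zero_or_pos n with rfl | hn
    · exfalso
      have h0 := congrFun (congrFun hX ⟨0, hr⟩) ⟨0, hr⟩
      simp [Matrix.mul_apply, Matrix.one_apply] at h0
    · exact ⟨⟨0, hn⟩⟩
  set hH := Matrix.isHermitian_conjTranspose_mul_self X₁ with hHdef
  set σ : Fin r → ℝ := hH.eigenvalues with hσ
  set lam : Fin n → ℝ := hB.isHermitian.eigenvalues with hlam
  set μmin : ℝ := ⨅ j, lam j with hμmin
  set μmax : ℝ := ⨆ j, lam j with hμmax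
  have hminle : ∀ j, μmin ≤ lam j := fun j =>
    ciInf_le (Set.Finite.bddBelow (Set.finite_range _)) j
  have hlemax : ∀ j, lam j ≤ μmax := fun j =>
    le_ciSup (Set.Finite.bddAbove (Set.finite_range _)) j
  have hμminpos : 0 < μmin := by
    obtain ⟨j0, hj0⟩ := Finite.exists_min lam
    exact lt_of_lt_of_le (hB.eigenvalues_pos j0) (le_ciInf hj0)
  have hμmaxpos : 0 < μmax := by
    obtain ⟨j0⟩ := hn
    exact lt_of_lt_of_le hμminpos ((hminle j0).trans (hlemax j0))
  have psd1 : (1 - (μmin : ℂ) • (X₁ᴴ * X₁)).PosSemidef := by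
    have h1 := (aux_sub_posSemidef hB.isHermitian hminle).conjTranspose_mul_mul_same X₁
    have e1 : X₁ᴴ * (B - (μmin : ℂ) • 1) * X₁ = 1 - (μmin : ℂ) • (X₁ᴴ * X₁) := by
      rw [Matrix.mul_sub, Matrix.sub_mul, hX, Matrix.mul_smul, Matrix.mul_one, Matrix.smul_mul]
    rwa [e1] at h1
  have psd2 : ((μmax : ℂ) • (X₁ᴴ * X₁) - 1).PosSemidef := by
    have h1 := (aux_smul_sub_posSemidef hB.isHermitian hlemax).conjTranspose_mul_mul_same X₁
    have e1 : X₁ᴴ * ((μmax : ℂ) • 1 - B) * X₁ = (μmax : ℂ) • (X₁ᴴ * X₁) - 1 := by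
      rw [Matrix.mul_sub, Matrix.sub_mul, hX, Matrix.mul_smul, Matrix.mul_one, Matrix.smul_mul]
    rwa [e1] at h1
  have hv1 : ∀ i : Fin r, star (⇑(hH.eigenvectorBasis i)) ⬝ᵥ ⇑(hH.eigenvectorBasis i) = 1 := by
    intro i
    have h := hH.eigenvectorBasis.orthonormal.1 i
    have h2 : (inner (𝕜 := ℂ) (hH.eigenvectorBasis i) (hH.eigenvectorBasis i)) = 1 := by
      rw [inner_self_eq_norm_sq_to_K, h]
      norm_num
    rw [EuclideanSpace.inner_eq_star_dotProduct, dotProduct_comm] at h2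
    exact h2
  have key1 : ∀ i, μmin * σ i ≤ 1 := by
    intro i
    have h0 := psd1.dotProduct_mulVec_nonneg (⇑(hH.eigenvectorBasis i))
    rw [sub_mulVec, one_mulVec, smul_mulVec, hH.mulVec_eigenvectorBasis i,
      dotProduct_sub, dotProduct_smul, dotProduct_smul, hv1 i] at h0
    have h0' : (0 : ℂ) ≤ ((1 - μmin * σ i : ℝ) : ℂ) := by
      convert h0 using 1
      push_cast
      simp [smul_eq_mul, Complex.real_smul, hσ]
    rw [Complex.zero_le_real] at h0'
    linarith
  have key2 : ∀ i, 1 ≤ μmax * σ i := by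
    intro i
    have h0 := psd2.dotProduct_mulVec_nonneg (⇑(hH.eigenvectorBasis i))
    rw [sub_mulVec, one_mulVec, smul_mulVec, hH.mulVec_eigenvectorBasis i,
      dotProduct_sub, dotProduct_smul, dotProduct_smul, hv1 i] at h0
    have h0' : (0 : ℂ) ≤ ((μmax * σ i - 1 : ℝ) : ℂ) := by
      convert h0 using 1
      push_cast
      simp [smul_eq_mul, Complex.real_smul, hσ]
    rw [Complex.zero_le_real] at h0'
    linarith
  have hsup : (⨆ i, σ i) ≤ 1 / μmin :=
    ciSup_le fun i => (le_div_iff₀' hμminpos).mpr (key1 i)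
  have hinf : 1 / μmax ≤ ⨅ i, σ i :=
    le_ciInf fun i => (div_le_iff₀' hμmaxpos).mpr (key2 i)
  calc (⨆ i, σ i) / (⨅ i, σ i) ≤ (1 / μmin) / (1 / μmax) := by
        apply div_le_div₀ (by positivity) hsup (by positivity) hinf
    _ = μmax / μmin := by
        field_simp
end
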